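/- Let l be a positive integer, φ₁, φ₂ ≥ 0 with φ₁ + φ₂ < π. Suppose â_α : ℝⁿ → ℂ are bounded functions for each multi-index α with |α| ≤ l, and set L(ξ) = Σ_{|α| ≤ l} â_α(ξ)(iξ)^α. Assume L(ξ) ∈ S_{φ₁} for all ξ, and there is c > 0 with |L(ξ)| ≥ c Σ_{k=1}^n |ξ_k|^l for all ξ ∈ ℝⁿ. Then the function σ₂(ξ, λ) = Σ_{|α| ≤ l} |λ|^{1 − |α|/l} â_α(ξ)(iξ)^α (L(ξ) + λ)^{−1} is uniformly bounded: there is C > 0 with |σ₂(ξ, λ)| ≤ C for all ξ ∈ ℝⁿ and all nonzero λ ∈ S_{φ₂}. -/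

import Mathlib

open Complex

/-- The closed sector of half-angle `φ` around the positive real axis, including `0`. -/
def sector (φ : ℝ) : Set ℂ := {w : ℂ | w = 0 ∨ |w.arg| ≤ φ}

/-- `(i ξ)^α` for a real variable `ξ` and a nonnegative exponent `α`,
with the convention `0 ^ 0 = 1` and `0 ^ α = 0` for `α > 0`. -/
noncomputable def ixpow (ξ : ℝ) (α : ℝ) : ℂ :=
  if ξ = 0 then (if α = 0 then 1 else 0)
  else Complex.exp (α * (Real.log |ξ| + Complex.I * (Real.pi / 2) * Real.sign ξ))

lemma abs_ixpow_nat (ξ : ℝ) (k : ℕ) : ‖(ixpow ξ (k : ℝ))‖ = |ξ| ^ k := by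
  unfold ixpow
  by_cases h : ξ = 0
  · by_cases hk : k = 0 <;> simp [h, hk]
  · rw [if_neg h, Complex.norm_exp]
    have hre : ((((k:ℝ)) : ℂ) * (↑(Real.log |ξ|) + Complex.I * ((Real.pi : ℂ) / 2) * (↑(Real.sign ξ) : ℂ))).re
        = (k : ℝ) * Real.log |ξ| := by
      simp [Complex.mul_re, Complex.add_re, Complex.div_re]
    rw [hre, ← Real.rpow_natCast |ξ| k, Real.rpow_def_of_pos (abs_pos.2 h), mul_comm]

lemma young_ineq (a b θ : ℝ) (ha : 0 ≤ a) (hb : 0 ≤ b) (h0 : 0 ≤ θ) (h1 : θ ≤ 1) :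
    a ^ (1 - θ) * b ^ θ ≤ a + b := by
  set M := max a b with hM
  have hM0 : 0 ≤ M := le_trans ha (le_max_left a b)
  calc a ^ (1 - θ) * b ^ θ
      ≤ M ^ (1 - θ) * M ^ θ := by
        apply mul_le_mul (Real.rpow_le_rpow ha (le_max_left a b) (by linarith))
          (Real.rpow_le_rpow hb (le_max_right a b) h0)
          (Real.rpow_nonneg hb θ) (Real.rpow_nonneg hM0 _)
    _ = M ^ ((1 - θ) + θ) := (Real.rpow_add' hM0 (by norm_num)).symm
    _ = M := by norm_num
    _ ≤ a + b := max_le_add_of_nonneg ha hb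

lemma prod_abs_pow_le (l : ℕ) (hl : 0 < l) {n : ℕ} (ξ : Fin n → ℝ) (α : Fin n → ℕ) :
    ∏ k, |ξ k| ^ (α k) ≤ (∑ k, |ξ k| ^ l) ^ (((∑ k, α k : ℕ) : ℝ) / l) := by
  set S := ∑ k, |ξ k| ^ l with hS
  have hS0 : 0 ≤ S := Finset.sum_nonneg fun k _ => pow_nonneg (abs_nonneg _) _
  set M := S ^ ((l:ℝ)⁻¹) with hM
  have hM0 : 0 ≤ M := Real.rpow_nonneg hS0 _
  have hkM : ∀ k, |ξ k| ≤ M := by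
    intro k
    have h1 : |ξ k| ^ l ≤ S :=
      Finset.single_le_sum (f := fun k => |ξ k| ^ l)
        (fun i _ => pow_nonneg (abs_nonneg _) _) (Finset.mem_univ k)
    have h2 : ((|ξ k| ^ l : ℝ)) ^ ((l:ℝ)⁻¹) ≤ M :=
      Real.rpow_le_rpow (pow_nonneg (abs_nonneg _) _) h1 (by positivity)
    rwa [← Real.rpow_natCast |ξ k| l, ← Real.rpow_mul (abs_nonneg _),
      mul_inv_cancel₀ (by exact_mod_cast hl.ne'), Real.rpow_one] at h2
  calc ∏ k, |ξ k| ^ α k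
      ≤ ∏ k, M ^ α k :=
        Finset.prod_le_prod (fun k _ => pow_nonneg (abs_nonneg _) _)
          (fun k _ => pow_le_pow_left₀ (abs_nonneg _) (hkM k) _)
    _ = M ^ (∑ k, α k) := Finset.prod_pow_eq_pow_sum Finset.univ α M
    _ = S ^ (((∑ k, α k : ℕ) : ℝ) / l) := by
        rw [← Real.rpow_natCast M, hM, ← Real.rpow_mul hS0]
        congr 1
        rw [← div_eq_inv_mul]

lemma sector_add_lower (φ₁ φ₂ : ℝ) (hφ₁ : 0 ≤ φ₁) (hφ₂ : 0 ≤ φ₂) (hφ : φ₁ + φ₂ < Real.pi) :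
    ∃ m, 0 < m ∧ m ≤ 1 ∧ ∀ z w : ℂ, z ∈ sector φ₁ → w ∈ sector φ₂ →
      m * (‖z‖ + ‖w‖) ≤ ‖(z + w)‖ := by
  set c0 := Real.cos (φ₁ + φ₂) with hc0def
  have hc0 : -1 < c0 := by
    have h := Real.cos_lt_cos_of_nonneg_of_le_pi (by linarith) (le_refl Real.pi) hφ
    rwa [Real.cos_pi] at h
  have hc1 : c0 ≤ 1 := Real.cos_le_one _
  set m := Real.sqrt ((1 + c0) / 2) with hmdef
  have hm : 0 < m := Real.sqrt_pos.2 (by linarith)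
  have hm2 : m ^ 2 = (1 + c0) / 2 := Real.sq_sqrt (by linarith)
  have hm1 : m ≤ 1 := by
    nlinarith [hm2, hm.le]
  refine ⟨m, hm, hm1, ?_⟩
  intro z w hz hw
  rcases eq_or_ne z 0 with rfl | hz0
  · simp only [norm_zero, zero_add]
    nlinarith [norm_nonneg w, hm1, hm.le]
  rcases eq_or_ne w 0 with rfl | hw0
  · simp only [norm_zero, add_zero]
    nlinarith [norm_nonneg z, hm1, hm.le]
  have ha : |z.arg| ≤ φ₁ := (hz.resolve_left hz0)
  have hb : |w.arg| ≤ φ₂ := (hw.resolve_left hw0)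
  set A := ‖z‖ with hA
  set Bw := ‖w‖ with hB
  have hA0 : 0 < A := norm_pos_iff.2 hz0
  have hB0 : 0 < Bw := norm_pos_iff.2 hw0
  have hzre : z.re = A * Real.cos z.arg := by
    rw [Complex.cos_arg hz0]; field_simp; rw [hA]
  have hzim : z.im = A * Real.sin z.arg := by
    rw [Complex.sin_arg]; field_simp; rw [hA]
  have hwre : w.re = Bw * Real.cos w.arg := by
    rw [Complex.cos_arg hw0]; field_simp; rw [hB]
  have hwim : w.im = Bw * Real.sin w.arg := by
    rw [Complex.sin_arg]; field_simp; rw [hB]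
  have hcos : c0 ≤ Real.cos (z.arg - w.arg) := by
    have h1 : |z.arg - w.arg| ≤ φ₁ + φ₂ := le_trans (abs_sub _ _) (by linarith)
    calc c0 ≤ Real.cos |z.arg - w.arg| :=
          Real.cos_le_cos_of_nonneg_of_le_pi (abs_nonneg _) hφ.le h1
      _ = Real.cos (z.arg - w.arg) := Real.cos_abs _
  have habs2 : (‖(z + w)‖) ^ 2 = (z.re + w.re) ^ 2 + (z.im + w.im) ^ 2 := by
    rw [Complex.sq_norm, Complex.normSq_apply]; simp [Complex.add_re, Complex.add_im]; ring
  have hexp : (z.re + w.re) ^ 2 + (z.im + w.im) ^ 2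
      = A ^ 2 + Bw ^ 2 + 2 * A * Bw * Real.cos (z.arg - w.arg) := by
    rw [hzre, hzim, hwre, hwim, Real.cos_sub]
    have hsa := Real.sin_sq_add_cos_sq z.arg
    have hsb := Real.sin_sq_add_cos_sq w.arg
    linear_combination (A ^ 2) * hsa + (Bw ^ 2) * hsb
  have hsq : (m * (A + Bw)) ^ 2 ≤ (‖(z + w)‖) ^ 2 := by
    rw [habs2, hexp]
    nlinarith [hm2, hcos, mul_pos hA0 hB0, sq_nonneg (A - Bw), hc1]
  have h := Real.sqrt_le_sqrt hsq
  rwa [Real.sqrt_sq (by positivity), Real.sqrt_sq (norm_nonneg _)] at h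

theorem sigma_two_uniform_bound (n l : ℕ) (hl : 0 < l) (φ₁ φ₂ : ℝ)
    (hφ₁ : 0 ≤ φ₁) (hφ₂ : 0 ≤ φ₂) (hφ : φ₁ + φ₂ < Real.pi)
    (a : (Fin n → Fin (l + 1)) → (Fin n → ℝ) → ℂ)
    (ha : ∀ α, ∃ B, ∀ ξ, ‖a α ξ‖ ≤ B)
    (L : (Fin n → ℝ) → ℂ)
    (hLdef : ∀ ξ, L ξ =
      ∑ α ∈ Finset.univ.filter (fun α : Fin n → Fin (l + 1) => ∑ k, (α k : ℕ) ≤ l),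
        a α ξ * ∏ k, ixpow (ξ k) (α k : ℕ))
    (hLsec : ∀ ξ, L ξ ∈ sector φ₁)
    (c : ℝ) (hc : 0 < c)
    (hLlow : ∀ ξ : Fin n → ℝ, c * ∑ k, |ξ k| ^ l ≤ ‖L ξ‖) :
    ∃ C > 0, ∀ (lam : ℂ), lam ∈ sector φ₂ → lam ≠ 0 → ∀ ξ : Fin n → ℝ,
      ‖(∑ α ∈ Finset.univ.filter (fun α : Fin n → Fin (l + 1) => ∑ k, (α k : ℕ) ≤ l),
          ((‖lam‖ ^ (1 - (∑ k, (α k : ℕ) : ℝ) / l) : ℝ) : ℂ) *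
            a α ξ * (∏ k, ixpow (ξ k) (α k : ℕ)) * (L ξ + lam)⁻¹)‖ ≤ C := by
  obtain ⟨m, hm, hm1, hsec⟩ := sector_add_lower φ₁ φ₂ hφ₁ hφ₂ hφ
  choose B hB using ha
  set F := Finset.univ.filter (fun α : Fin n → Fin (l + 1) => ∑ k, (α k : ℕ) ≤ l) with hF
  have hBnn : ∀ α, 0 ≤ B α := fun α => le_trans (norm_nonneg _) (hB α (fun _ => 0))
  set K := max 1 c⁻¹ / m with hK
  have hmax0 : (0:ℝ) ≤ max 1 c⁻¹ := le_trans zero_le_one (le_max_left _ _)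
  have hK0 : 0 < K := div_pos (lt_of_lt_of_le one_pos (le_max_left _ _)) hm
  have hBsum : 0 ≤ ∑ α ∈ F, B α := Finset.sum_nonneg fun α _ => hBnn α
  refine ⟨(∑ α ∈ F, B α) * K + 1, by nlinarith, ?_⟩
  intro lam hlam hlam0 ξ
  have hlamabs : 0 < ‖lam‖ := norm_pos_iff.2 hlam0
  have hLsum := hsec (L ξ) lam (hLsec ξ) hlam
  have hden0 : 0 < ‖(L ξ + lam)‖ := by
    have h1 : 0 < m * (‖(L ξ)‖ + ‖lam‖) := by
      have := norm_nonneg (L ξ); nlinarith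
    linarith
  set S := ∑ k, |ξ k| ^ l with hSdef
  have hS0 : 0 ≤ S := Finset.sum_nonneg fun k _ => pow_nonneg (abs_nonneg _) _
  have key : ∀ α ∈ F,
      ‖(((‖lam‖ ^ (1 - (∑ k, (α k : ℕ) : ℝ) / l) : ℝ) : ℂ) *
        a α ξ * (∏ k, ixpow (ξ k) (α k : ℕ)) * (L ξ + lam)⁻¹)‖ ≤ B α * K := by
    intro α hα
    have hαl : ∑ k, (α k : ℕ) ≤ l := (Finset.mem_filter.1 hα).2
    set s : ℕ := ∑ k, (α k : ℕ) with hs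
    have hcast : (∑ k, ((α k : ℕ) : ℝ)) = (s : ℝ) := by push_cast [hs]; rfl
    set θ : ℝ := (s : ℝ) / l with hθ
    have hθ0 : 0 ≤ θ := by positivity
    have hθ1 : θ ≤ 1 := by
      rw [hθ, div_le_one (by exact_mod_cast hl)]; exact_mod_cast hαl
    set r : ℝ := ‖lam‖ ^ (1 - (∑ k, (α k : ℕ) : ℝ) / l) with hr
    have hrθ : r = ‖lam‖ ^ (1 - θ) := by rw [hr, hcast]
    have hr0 : 0 ≤ r := Real.rpow_nonneg hlamabs.le _
    have hP : ‖(∏ k, ixpow (ξ k) (α k : ℕ))‖ = ∏ k, |ξ k| ^ ((α k : ℕ)) := by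
      rw [norm_prod]
      exact Finset.prod_congr rfl fun k _ => abs_ixpow_nat _ _
    have hPS : (∏ k, |ξ k| ^ ((α k : ℕ))) ≤ S ^ θ := by
      have := prod_abs_pow_le l hl ξ (fun k => (α k : ℕ))
      rwa [← hs, ← hθ, ← hSdef] at this
    have hP0 : 0 ≤ ∏ k, |ξ k| ^ ((α k : ℕ)) :=
      Finset.prod_nonneg fun k _ => pow_nonneg (abs_nonneg _) _
    have hkey : r * (∏ k, |ξ k| ^ ((α k : ℕ))) ≤ K * ‖(L ξ + lam)‖ := by
      have h2 : r * S ^ θ ≤ ‖lam‖ + S := by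
        rw [hrθ]; exact young_ineq _ _ _ hlamabs.le hS0 hθ0 hθ1
      have h3 : S ≤ c⁻¹ * ‖(L ξ)‖ := by
        rw [← div_eq_inv_mul, le_div_iff₀ hc, mul_comm]; exact hLlow ξ
      have h4 : ‖lam‖ + S ≤ max 1 c⁻¹ * (‖(L ξ)‖ + ‖lam‖) := by
        have hx := le_max_left (1:ℝ) c⁻¹
        have hy := le_max_right (1:ℝ) c⁻¹
        have hLn := norm_nonneg (L ξ)
        nlinarith
      have h5 : ‖(L ξ)‖ + ‖lam‖ ≤ m⁻¹ * ‖(L ξ + lam)‖ := by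
        rw [← div_eq_inv_mul, le_div_iff₀ hm, mul_comm]; exact hLsum
      calc r * (∏ k, |ξ k| ^ ((α k : ℕ)))
          ≤ r * S ^ θ := mul_le_mul_of_nonneg_left hPS hr0
        _ ≤ ‖lam‖ + S := h2
        _ ≤ max 1 c⁻¹ * (‖(L ξ)‖ + ‖lam‖) := h4
        _ ≤ max 1 c⁻¹ * (m⁻¹ * ‖(L ξ + lam)‖) :=
            mul_le_mul_of_nonneg_left h5 hmax0
        _ = K * ‖(L ξ + lam)‖ := by rw [hK, div_eq_mul_inv]; ring
    rw [norm_mul, norm_mul, norm_mul, norm_inv, Complex.norm_real, Real.norm_of_nonneg hr0, hP]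
    calc r * ‖(a α ξ)‖ * (∏ k, |ξ k| ^ ((α k : ℕ))) * (‖(L ξ + lam)‖)⁻¹
        = ‖(a α ξ)‖ *
            ((r * (∏ k, |ξ k| ^ ((α k : ℕ)))) * (‖(L ξ + lam)‖)⁻¹) := by ring
      _ ≤ B α * ((K * ‖(L ξ + lam)‖) * (‖(L ξ + lam)‖)⁻¹) := by
          apply mul_le_mul (hB α ξ)
            (mul_le_mul_of_nonneg_right hkey (inv_nonneg.2 hden0.le))
            (by positivity) (hBnn α)
      _ = B α * K := by field_simp
  calc ‖(∑ α ∈ F,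
          ((‖lam‖ ^ (1 - (∑ k, (α k : ℕ) : ℝ) / l) : ℝ) : ℂ) *
            a α ξ * (∏ k, ixpow (ξ k) (α k : ℕ)) * (L ξ + lam)⁻¹)‖
      ≤ ∑ α ∈ F, ‖(((‖lam‖ ^ (1 - (∑ k, (α k : ℕ) : ℝ) / l) : ℝ) : ℂ) *
            a α ξ * (∏ k, ixpow (ξ k) (α k : ℕ)) * (L ξ + lam)⁻¹)‖ :=
        norm_sum_le _ _
    _ ≤ ∑ α ∈ F, B α * K := Finset.sum_le_sum key
    _ = (∑ α ∈ F, B α) * K := (Finset.sum_mul _ _ _).symm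
    _ ≤ (∑ α ∈ F, B α) * K + 1 := by linarith
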